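/- Let A ∈ 𝔪. Then the entrywise Bochner integral over G satisfies ∫_G (φ(g) A φ(g)⁻¹) ⊗ (φ(g) A φ(g)⁻¹) dμ(g) = (‖A‖_F² / d) · K, where ⊗ denotes the Kronecker product of N×N matrices and K = Σ_{j=1}^d F_j ⊗ F_j is the split Casimir. -/

import Mathlib

open MeasureTheory Matrix
open scoped Kronecker

attribute [local instance] Matrix.normedAddCommGroup Matrix.normedSpace
noncomputable instance matrixContinuousENormAux {m n : Type} [Fintype m] [Fintype n] :
    ContinuousENorm (Matrix m n ℂ) := SeminormedAddGroup.toContinuousENorm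

section Aux
variable {N d : ℕ}

/-- coefficient functional `X ↦ -Tr(C X)`. -/
noncomputable def ellAux (C : Matrix (Fin N) (Fin N) ℂ) : Matrix (Fin N) (Fin N) ℂ →ₗ[ℂ] ℂ :=
  -( (Matrix.traceLinearMap (Fin N) ℂ ℂ).comp (LinearMap.mulLeft ℂ C) )

@[simp] lemma ellAux_apply (C X : Matrix (Fin N) (Fin N) ℂ) :
    ellAux C X = -((C * X).trace) := rfl

lemma expand_in_basis (F : Fin d → Matrix (Fin N) (Fin N) ℂ)
    (horth : ∀ j k, Matrix.trace (F j * F k) = if j = k then (-1 : ℂ) else 0)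
    {X : Matrix (Fin N) (Fin N) ℂ} (hX : X ∈ Submodule.span ℂ (Set.range F)) :
    X = ∑ j, (-((F j * X).trace)) • F j := by
  classical
  set D : Matrix (Fin N) (Fin N) ℂ →ₗ[ℂ] Matrix (Fin N) (Fin N) ℂ :=
    LinearMap.id - ∑ j, (ellAux (F j)).smulRight (F j) with hD
  have hker : Submodule.span ℂ (Set.range F) ≤ LinearMap.ker D := by
    rw [Submodule.span_le]
    rintro x ⟨k, rfl⟩
    have hDk : D (F k) = F k - ∑ j, (-((F j * F k).trace)) • F j := by
      simp [hD, LinearMap.sub_apply, LinearMap.sum_apply]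
    simp only [SetLike.mem_coe, LinearMap.mem_ker, hDk, sub_eq_zero]
    rw [show (∑ j, (-((F j * F k).trace)) • F j)
        = ∑ j, (if j = k then F j else 0) by
      refine Finset.sum_congr rfl fun j _ => ?_
      rw [horth]
      split <;> simp]
    simp
  have h0 := hker hX
  rw [LinearMap.mem_ker, hD] at h0
  have h1 : X - ∑ j, (ellAux (F j)).smulRight (F j) X = 0 := by
    simpa [LinearMap.sub_apply, LinearMap.sum_apply] using h0
  rw [sub_eq_zero] at h1
  simpa using h1

lemma indep_coeff (F : Fin d → Matrix (Fin N) (Fin N) ℂ)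
    (horth : ∀ j k, Matrix.trace (F j * F k) = if j = k then (-1 : ℂ) else 0)
    (c : Fin d → ℂ) (h : ∑ j, c j • F j = 0) : ∀ k, c k = 0 := by
  intro k
  have h2 := congrArg (fun X => (F k * X).trace) h
  simp only [Finset.mul_sum, Matrix.mul_smul, trace_sum, trace_smul, trace_zero, horth,
    smul_eq_mul, mul_ite, mul_neg_one, mul_zero, Finset.sum_ite_eq, Finset.mem_univ,
    if_true] at h2
  exact neg_eq_zero.mp h2

lemma kron_expand (F : Fin d → Matrix (Fin N) (Fin N) ℂ) (b c : Fin d → ℂ) :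
    (∑ j, b j • F j) ⊗ₖ (∑ k, c k • F k)
      = ∑ j, ∑ k, (b j * c k) • (F j ⊗ₖ F k) := by
  ext ⟨a1, a2⟩ ⟨b1, b2⟩
  simp only [Matrix.kroneckerMap_apply, Matrix.sum_apply, Matrix.smul_apply, smul_eq_mul,
    Finset.sum_mul, Finset.mul_sum]
  rw [Finset.sum_comm]
  refine Finset.sum_congr rfl fun j _ => Finset.sum_congr rfl fun k _ => ?_
  ring

lemma trace_comb {N d : ℕ} (F : Fin d → Matrix (Fin N) (Fin N) ℂ)
    (horth : ∀ j k, Matrix.trace (F j * F k) = if j = k then (-1 : ℂ) else 0)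
    (b c : Fin d → ℂ) :
    ((∑ j, b j • F j) * (∑ k, c k • F k)).trace = -(∑ j, b j * c j) := by
  classical
  rw [Finset.sum_mul, trace_sum]
  have h1 : ∀ j, ((b j • F j) * ∑ k, c k • F k).trace
      = ∑ k, b j * c k * ((F j * F k).trace) := by
    intro j
    rw [Finset.mul_sum, trace_sum]
    refine Finset.sum_congr rfl fun k _ => ?_
    rw [Matrix.smul_mul, Matrix.mul_smul, trace_smul, trace_smul]
    simp only [smul_eq_mul]
    ring
  calc (∑ j, ((b j • F j) * ∑ k, c k • F k).trace)
      = ∑ j, ∑ k, b j * c k * ((F j * F k).trace) := Finset.sum_congr rfl fun j _ => h1 j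
    _ = -(∑ j, b j * c j) := by
        simp only [horth, mul_ite, mul_neg_one, mul_zero, Finset.sum_ite_eq, Finset.mem_univ,
          if_true]
        rw [← Finset.sum_neg_distrib]

end Aux

/-- For a compact group `G` with normalized Haar measure `μ`, a continuous
unitary representation `φ : G → U(N)`, and a Frobenius-orthonormal family `F₁, …, F_d` of
skew-Hermitian matrices spanning `𝔪 = span_ℝ {F_j}` which is a Lie algebra, invariant under
conjugation by `φ(g)`, and whose complexification is an irreducible `G`-module under
conjugation: for every `A ∈ 𝔪`,
`∫_G (φ(g) A φ(g)⁻¹) ⊗ (φ(g) A φ(g)⁻¹) dμ(g) = (‖A‖_F² / d) • K`,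
where `K = ∑_j F_j ⊗ F_j` is the split Casimir and `‖A‖_F² = −Tr(A²)`. -/
theorem stmt_0
    {G : Type} [Group G] [TopologicalSpace G] [IsTopologicalGroup G] [CompactSpace G]
    [MeasurableSpace G] [BorelSpace G]
    (μ : Measure G) [μ.IsHaarMeasure] [IsProbabilityMeasure μ]
    {N d : ℕ} (hN : 1 ≤ N) (hd : 1 ≤ d)
    (φ : G →* Matrix.unitaryGroup (Fin N) ℂ)
    (hcont : Continuous fun g => (φ g : Matrix (Fin N) (Fin N) ℂ))
    (F : Fin d → Matrix (Fin N) (Fin N) ℂ)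
    (hskew : ∀ j, (F j)ᴴ = -(F j))
    (horth : ∀ j k, Matrix.trace (F j * F k) = if j = k then (-1 : ℂ) else 0)
    (hLie : ∀ X ∈ Submodule.span ℝ (Set.range F), ∀ Y ∈ Submodule.span ℝ (Set.range F),
      ⁅X, Y⁆ ∈ Submodule.span ℝ (Set.range F))
    (hconj : ∀ g : G, ∀ X ∈ Submodule.span ℝ (Set.range F),
      (φ g : Matrix (Fin N) (Fin N) ℂ) * X * (φ g⁻¹ : Matrix (Fin N) (Fin N) ℂ) ∈
        Submodule.span ℝ (Set.range F))
    (hirr : ∀ W : Submodule ℂ (Matrix (Fin N) (Fin N) ℂ),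
      W ≤ Submodule.span ℂ (Set.range F) →
      (∀ g : G, ∀ X ∈ W,
        (φ g : Matrix (Fin N) (Fin N) ℂ) * X * (φ g⁻¹ : Matrix (Fin N) (Fin N) ℂ) ∈ W) →
      W = ⊥ ∨ W = Submodule.span ℂ (Set.range F))
    (A : Matrix (Fin N) (Fin N) ℂ) (hA : A ∈ Submodule.span ℝ (Set.range F)) :
    (∫ g, ((φ g : Matrix (Fin N) (Fin N) ℂ) * A * (φ g⁻¹ : Matrix (Fin N) (Fin N) ℂ)) ⊗ₖ
        ((φ g : Matrix (Fin N) (Fin N) ℂ) * A * (φ g⁻¹ : Matrix (Fin N) (Fin N) ℂ)) ∂μ)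
      = ((-(Matrix.trace (A * A))) / (d : ℂ)) • ∑ j, F j ⊗ₖ F j := by
  classical
  -- abbreviation for conjugation orbit
  set c : G → Matrix (Fin N) (Fin N) ℂ :=
    fun g => (φ g : Matrix (Fin N) (Fin N) ℂ) * A * (φ g⁻¹ : Matrix (Fin N) (Fin N) ℂ) with hcdef
  set β : Fin d → G → ℂ := fun j g => -((F j * c g).trace) with hβdef
  set V : Submodule ℂ (Matrix (Fin N) (Fin N) ℂ) := Submodule.span ℂ (Set.range F) with hVdef
  -- group/unitary facts
  have hmul : ∀ g h : G, (φ (g*h) : Matrix (Fin N) (Fin N) ℂ)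
      = (φ g : Matrix (Fin N) (Fin N) ℂ) * (φ h : Matrix (Fin N) (Fin N) ℂ) := by
    intro g h; rw [_root_.map_mul]; rfl
  have hone : (φ (1:G) : Matrix (Fin N) (Fin N) ℂ) = 1 := by rw [_root_.map_one]; rfl
  have hleft : ∀ g : G, (φ g⁻¹ : Matrix (Fin N) (Fin N) ℂ) * (φ g : Matrix (Fin N) (Fin N) ℂ) = 1 := by
    intro g; rw [← hmul, inv_mul_cancel, hone]
  have hinvstar : ∀ g : G, (φ g⁻¹ : Matrix (Fin N) (Fin N) ℂ) = (φ g : Matrix (Fin N) (Fin N) ℂ)ᴴ := by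
    intro g; rw [_root_.map_inv, Matrix.UnitaryGroup.inv_val, Matrix.star_eq_conjTranspose]
  have hwcont : Continuous fun g => (φ g⁻¹ : Matrix (Fin N) (Fin N) ℂ) := by
    simp only [hinvstar]; exact hcont.matrix_conjTranspose
  have htrconj : ∀ (g : G) (X : Matrix (Fin N) (Fin N) ℂ),
      ((φ g : Matrix (Fin N) (Fin N) ℂ) * X * (φ g⁻¹ : Matrix (Fin N) (Fin N) ℂ)).trace = X.trace := by
    intro g X; rw [trace_mul_comm, ← mul_assoc, hleft g, one_mul]
  have hconjmul : ∀ (g : G) (X Y : Matrix (Fin N) (Fin N) ℂ),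
      ((φ g : Matrix (Fin N) (Fin N) ℂ) * X * (φ g⁻¹ : Matrix (Fin N) (Fin N) ℂ)) *
        ((φ g : Matrix (Fin N) (Fin N) ℂ) * Y * (φ g⁻¹ : Matrix (Fin N) (Fin N) ℂ))
      = (φ g : Matrix (Fin N) (Fin N) ℂ) * (X * Y) * (φ g⁻¹ : Matrix (Fin N) (Fin N) ℂ) := by
    intro g X Y
    simp only [mul_assoc]
    rw [← mul_assoc (φ g⁻¹ : Matrix (Fin N) (Fin N) ℂ) (φ g : Matrix (Fin N) (Fin N) ℂ), hleft g, one_mul]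
  have hconjint : ∀ (h : G) (f : G → Matrix (Fin N) (Fin N) ℂ), Integrable f μ →
      (∫ g, (φ h : Matrix (Fin N) (Fin N) ℂ) * f g * (φ h⁻¹ : Matrix (Fin N) (Fin N) ℂ) ∂μ)
        = (φ h : Matrix (Fin N) (Fin N) ℂ) * (∫ g, f g ∂μ) * (φ h⁻¹ : Matrix (Fin N) (Fin N) ℂ) := by
    intro h f hf
    set L : Matrix (Fin N) (Fin N) ℂ →ₗ[ℂ] Matrix (Fin N) (Fin N) ℂ :=
      (LinearMap.mulRight ℂ (φ h⁻¹ : Matrix (Fin N) (Fin N) ℂ)).comp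
        (LinearMap.mulLeft ℂ (φ h : Matrix (Fin N) (Fin N) ℂ)) with hLdef
    have hL : ∀ X, L X = (φ h : Matrix (Fin N) (Fin N) ℂ) * X * (φ h⁻¹ : Matrix (Fin N) (Fin N) ℂ) :=
      fun X => rfl
    have := (LinearMap.toContinuousLinearMap L).integral_comp_comm hf
    exact this
  -- membership and continuity of the orbit
  have hcmem : ∀ g : G, c g ∈ V := by
    intro g
    exact Submodule.span_subset_span ℝ ℂ _ (hconj g A hA)
  have hccont : Continuous c := (hcont.matrix_mul continuous_const).matrix_mul hwcont
  have hβcont : ∀ j, Continuous (β j) :=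
    fun j => ((continuous_const.matrix_mul hccont).matrix_trace).neg
  have hIntC : ∀ f : G → ℂ, Continuous f → Integrable f μ :=
    fun f hf => hf.integrable_of_hasCompactSupport (HasCompactSupport.of_compactSpace f)
  have hIntM : ∀ f : G → Matrix (Fin N) (Fin N) ℂ, Continuous f → Integrable f μ :=
    fun f hf => hf.integrable_of_hasCompactSupport (HasCompactSupport.of_compactSpace f)
  have hIntK : ∀ f : G → Matrix (Fin N × Fin N) (Fin N × Fin N) ℂ, Continuous f → Integrable f μ :=
    fun f hf => hf.integrable_of_hasCompactSupport (HasCompactSupport.of_compactSpace f)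
  have hL2c : ∀ g : G, c g = ∑ j, β j g • F j := fun g => expand_in_basis F horth (hcmem g)
  -- the conjugation cocycle
  have hcocycle : ∀ h g : G, c (h*g)
      = (φ h : Matrix (Fin N) (Fin N) ℂ) * c g * (φ h⁻¹ : Matrix (Fin N) (Fin N) ℂ) := by
    intro h g
    simp only [hcdef]
    rw [_root_.mul_inv_rev, hmul, hmul]
    simp [mul_assoc]
  -- Step B : expansion of the integral
  have hTexp : (∫ g, c g ⊗ₖ c g ∂μ)
      = ∑ j, ∑ k, (∫ g, β j g * β k g ∂μ) • (F j ⊗ₖ F k) := by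
    have hfun : (fun g => c g ⊗ₖ c g)
        = fun g => ∑ j, ∑ k, (β j g * β k g) • (F j ⊗ₖ F k) := by
      funext g
      conv_lhs => rw [hL2c g]
      exact kron_expand F (fun j => β j g) (fun k => β k g)
    rw [hfun]
    rw [integral_finset_sum _ (fun j _ => integrable_finset_sum _ (fun k _ =>
      hIntK _ (((hβcont j).mul (hβcont k)).smul continuous_const)))]
    refine Finset.sum_congr rfl fun j _ => ?_
    rw [integral_finset_sum (f := fun k g => (β j g * β k g) • (F j ⊗ₖ F k)) _ (fun k _ => hIntK _ (((hβcont j).mul (hβcont k)).smul continuous_const))]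
    exact Finset.sum_congr rfl fun k _ => integral_smul_const _ _
  -- the averaging operator Φ
  have hIntegrandCont : ∀ Z : Matrix (Fin N) (Fin N) ℂ,
      Continuous (fun g => (-((c g * Z).trace)) • c g) :=
    fun Z => (((hccont.matrix_mul continuous_const).matrix_trace).neg).smul hccont
  have hIntegrand : ∀ Z : Matrix (Fin N) (Fin N) ℂ,
      Integrable (fun g => (-((c g * Z).trace)) • c g) μ := fun Z => hIntM _ (hIntegrandCont Z)
  set Φ : Matrix (Fin N) (Fin N) ℂ →ₗ[ℂ] Matrix (Fin N) (Fin N) ℂ :=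
    { toFun := fun Z => ∫ g, (-((c g * Z).trace)) • c g ∂μ
      map_add' := by
        intro X Y
        show (∫ g, (-((c g * (X + Y)).trace)) • c g ∂μ)
          = (∫ g, (-((c g * X).trace)) • c g ∂μ) + ∫ g, (-((c g * Y).trace)) • c g ∂μ
        have hfun : (fun g => (-((c g * (X + Y)).trace)) • c g)
            = fun g => (-((c g * X).trace)) • c g + (-((c g * Y).trace)) • c g := by
          funext g; rw [mul_add, trace_add, neg_add, add_smul]
        rw [hfun, integral_add (hIntegrand X) (hIntegrand Y)]
      map_smul' := by
        intro a X
        show (∫ g, (-((c g * (a • X)).trace)) • c g ∂μ)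
          = a • ∫ g, (-((c g * X).trace)) • c g ∂μ
        have hfun : (fun g => (-((c g * (a • X)).trace)) • c g)
            = fun g => a • ((-((c g * X).trace)) • c g) := by
          funext g
          rw [Matrix.mul_smul, trace_smul, smul_smul]
          congr 1
          simp only [smul_eq_mul]
          ring
        rw [hfun, integral_smul] } with hΦdef
  have hΦapply : ∀ Z : Matrix (Fin N) (Fin N) ℂ, Φ Z = ∫ g, (-((c g * Z).trace)) • c g ∂μ :=
    fun Z => rfl
  -- expansion of Φ
  have hsmulc : ∀ (s : ℂ) (g : G), s • c g = ∑ j, (s * β j g) • F j := by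
    intro s g
    conv_lhs => rw [hL2c g]
    rw [Finset.smul_sum]
    exact Finset.sum_congr rfl fun j _ => by rw [smul_smul]
  have hΦexp : ∀ Z : Matrix (Fin N) (Fin N) ℂ,
      Φ Z = ∑ j, (∫ g, (-((c g * Z).trace)) * β j g ∂μ) • F j := by
    intro Z
    rw [hΦapply Z]
    have hfun : (fun g => (-((c g * Z).trace)) • c g)
        = fun g => ∑ j, ((-((c g * Z).trace)) * β j g) • F j := funext fun g => hsmulc _ g
    rw [hfun, integral_finset_sum (f := fun j g => ((-((c g * Z).trace)) * β j g) • F j) _ (fun j _ => hIntM _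
      ((((hccont.matrix_mul continuous_const).matrix_trace).neg.mul (hβcont j)).smul
        continuous_const))]
    exact Finset.sum_congr rfl fun j _ => integral_smul_const _ _
  have hΦV : ∀ Z : Matrix (Fin N) (Fin N) ℂ, Φ Z ∈ V := by
    intro Z
    rw [hΦexp Z, hVdef]
    exact Submodule.sum_mem _ fun j _ =>
      Submodule.smul_mem _ _ (Submodule.subset_span ⟨j, rfl⟩)
  -- equivariance of Φ
  have hEquiv : ∀ (h : G) (Z : Matrix (Fin N) (Fin N) ℂ),
      Φ ((φ h : Matrix (Fin N) (Fin N) ℂ) * Z * (φ h⁻¹ : Matrix (Fin N) (Fin N) ℂ))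
      = (φ h : Matrix (Fin N) (Fin N) ℂ) * Φ Z * (φ h⁻¹ : Matrix (Fin N) (Fin N) ℂ) := by
    intro h Z
    have key : ∀ g : G,
        (-((c (h*g) * ((φ h : Matrix (Fin N) (Fin N) ℂ) * Z *
          (φ h⁻¹ : Matrix (Fin N) (Fin N) ℂ))).trace)) • c (h*g)
        = (φ h : Matrix (Fin N) (Fin N) ℂ) * ((-((c g * Z).trace)) • c g) *
          (φ h⁻¹ : Matrix (Fin N) (Fin N) ℂ) := by
      intro g
      rw [hcocycle h g, hconjmul h (c g) Z, htrconj h (c g * Z)]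
      rw [Matrix.mul_smul, Matrix.smul_mul]
    rw [hΦapply]
    rw [← integral_mul_left_eq_self (fun g =>
      (-((c g * ((φ h : Matrix (Fin N) (Fin N) ℂ) * Z *
        (φ h⁻¹ : Matrix (Fin N) (Fin N) ℂ))).trace)) • c g) h]
    have hfun2 : (fun g => (-((c (h*g) * ((φ h : Matrix (Fin N) (Fin N) ℂ) * Z *
          (φ h⁻¹ : Matrix (Fin N) (Fin N) ℂ))).trace)) • c (h*g))
        = fun g => (φ h : Matrix (Fin N) (Fin N) ℂ) * ((-((c g * Z).trace)) • c g) *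
          (φ h⁻¹ : Matrix (Fin N) (Fin N) ℂ) := funext key
    rw [hfun2, hconjint h _ (hIntegrand Z), hΦapply]
  -- conjugation stabilizes V
  have hconjC : ∀ (g : G), ∀ X ∈ V,
      (φ g : Matrix (Fin N) (Fin N) ℂ) * X * (φ g⁻¹ : Matrix (Fin N) (Fin N) ℂ) ∈ V := by
    intro g X hX
    rw [hVdef] at hX ⊢
    induction hX using Submodule.span_induction with
    | mem x hx =>
        exact Submodule.span_subset_span ℝ ℂ _ (hconj g x (Submodule.subset_span hx))
    | zero => simpa using Submodule.zero_mem (Submodule.span ℂ (Set.range F))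
    | add x y hx hy hx' hy' =>
        rw [mul_add, add_mul]; exact Submodule.add_mem _ hx' hy'
    | smul a x hx hx' =>
        rw [Matrix.mul_smul, Matrix.smul_mul]; exact Submodule.smul_mem _ _ hx'
  -- eigenvalue via Schur
  have hF0 : F ⟨0, hd⟩ ≠ 0 := by
    intro h0
    have h1 := horth ⟨0, hd⟩ ⟨0, hd⟩
    rw [h0] at h1
    simp at h1
  haveI : Nontrivial V := by
    refine ⟨⟨F ⟨0, hd⟩, ?_⟩, 0, ?_⟩
    · rw [hVdef]; exact Submodule.subset_span ⟨_, rfl⟩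
    · intro hxx
      exact hF0 (by simpa using congrArg Subtype.val hxx)
  set ΦV : Module.End ℂ V := Φ.restrict (fun x _ => hΦV x) with hΦVdef
  obtain ⟨lam, hlam⟩ := Module.End.exists_eigenvalue ΦV
  obtain ⟨x, hx⟩ := hlam.exists_hasEigenvector
  set W : Submodule ℂ (Matrix (Fin N) (Fin N) ℂ) :=
    V ⊓ LinearMap.ker (Φ - lam • LinearMap.id) with hWdef
  have hWinv : ∀ g : G, ∀ X ∈ W,
      (φ g : Matrix (Fin N) (Fin N) ℂ) * X * (φ g⁻¹ : Matrix (Fin N) (Fin N) ℂ) ∈ W := by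
    intro g X hX
    rw [hWdef, Submodule.mem_inf] at hX ⊢
    obtain ⟨hX1, hX2⟩ := hX
    rw [LinearMap.mem_ker, LinearMap.sub_apply, LinearMap.smul_apply, LinearMap.id_apply,
      sub_eq_zero] at hX2
    refine ⟨hconjC g X hX1, ?_⟩
    rw [LinearMap.mem_ker, LinearMap.sub_apply, LinearMap.smul_apply, LinearMap.id_apply,
      sub_eq_zero]
    rw [hEquiv g X, hX2, Matrix.mul_smul, Matrix.smul_mul]
  have hxW : (x : Matrix (Fin N) (Fin N) ℂ) ∈ W := by
    rw [hWdef, Submodule.mem_inf]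
    refine ⟨x.2, ?_⟩
    rw [LinearMap.mem_ker, LinearMap.sub_apply, LinearMap.smul_apply, LinearMap.id_apply,
      sub_eq_zero]
    have h1 := congrArg Subtype.val hx.apply_eq_smul
    simpa [hΦVdef, LinearMap.restrict_apply] using h1
  have hWtop : W = V := by
    rcases hirr W inf_le_left hWinv with h | h
    · exfalso
      rw [h] at hxW
      exact hx.2 (Subtype.ext (by simpa using hxW))
    · exact h
  have hEig : ∀ k : Fin d, Φ (F k) = lam • F k := by
    intro k
    have hk : F k ∈ V := by rw [hVdef]; exact Submodule.subset_span ⟨k, rfl⟩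
    rw [← hWtop, hWdef, Submodule.mem_inf] at hk
    have hk2 := hk.2
    rw [LinearMap.mem_ker, LinearMap.sub_apply, LinearMap.smul_apply, LinearMap.id_apply,
      sub_eq_zero] at hk2
    exact hk2
  -- coefficient identification
  have hq : ∀ k j : Fin d, (∫ g, β k g * β j g ∂μ) = if j = k then lam else 0 := by
    intro k j
    have e1 : Φ (F k) = ∑ j, (∫ g, β k g * β j g ∂μ) • F j := by
      rw [hΦexp (F k)]
      refine Finset.sum_congr rfl fun j _ => ?_
      congr 2
      funext g
      congr 1
      show -((c g * F k).trace) = -((F k * c g).trace)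
      rw [trace_mul_comm]
    have e2 : ∑ j, (∫ g, β k g * β j g ∂μ) • F j = ∑ j, (if j = k then lam else 0) • F j := by
      rw [← e1, hEig k]
      rw [show (∑ j, (if j = k then lam else 0) • F j) = lam • F k by
        simp [ite_smul, Finset.sum_ite_eq', Finset.mem_univ]]
    have e3 : ∑ j, ((∫ g, β k g * β j g ∂μ) - (if j = k then lam else 0)) • F j = 0 := by
      simp only [sub_smul]
      rw [Finset.sum_sub_distrib, e2, sub_self]
    have e4 := indep_coeff F horth _ e3 j
    exact sub_eq_zero.mp e4
  -- value of lam
  have hptsum : ∀ g : G, (∑ k, β k g * β k g) = -((A * A).trace) := by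
    intro g
    have h1 : ((c g) * (c g)).trace = (A * A).trace := by
      show ((φ g : Matrix (Fin N) (Fin N) ℂ) * A * (φ g⁻¹ : Matrix (Fin N) (Fin N) ℂ) *
        ((φ g : Matrix (Fin N) (Fin N) ℂ) * A * (φ g⁻¹ : Matrix (Fin N) (Fin N) ℂ))).trace
        = (A * A).trace
      rw [hconjmul g A A, htrconj]
    have h2 : ((c g) * (c g)).trace = -(∑ k, β k g * β k g) := by
      conv_lhs => rw [hL2c g]
      exact trace_comb F horth _ _
    rw [← neg_eq_iff_eq_neg.mpr h2, h1]
  have hlamd : (d : ℂ) * lam = -((A * A).trace) := by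
    have h3 : ∑ k : Fin d, (∫ g, β k g * β k g ∂μ) = (d : ℂ) * lam := by
      calc ∑ k : Fin d, (∫ g, β k g * β k g ∂μ)
          = ∑ _k : Fin d, lam := Finset.sum_congr rfl fun k _ => by rw [hq k k, if_pos rfl]
        _ = (d : ℂ) * lam := by simp [Finset.sum_const, mul_comm]
    have h4 : ∑ k : Fin d, (∫ g, β k g * β k g ∂μ) = -((A * A).trace) := by
      rw [← integral_finset_sum (f := fun k g => β k g * β k g) _ (fun k _ => hIntC _ ((hβcont k).mul (hβcont k)))]
      rw [show (fun g => ∑ k, β k g * β k g) = fun _ => -((A*A).trace) from funext hptsum]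
      rw [integral_const]
      simp
    rw [← h3, h4]
  have hd0 : (d : ℂ) ≠ 0 := Nat.cast_ne_zero.mpr (by omega)
  have hlamval : lam = (-(Matrix.trace (A * A))) / (d : ℂ) := by
    rw [eq_div_iff hd0, ← hlamd]
    ring
  -- finish
  show (∫ g, c g ⊗ₖ c g ∂μ) = ((-(Matrix.trace (A * A))) / (d : ℂ)) • ∑ j, F j ⊗ₖ F j
  rw [hTexp]
  have hswap : ∀ j k : Fin d, (∫ g, β j g * β k g ∂μ) = if j = k then lam else 0 := by
    intro j k
    rw [show (∫ g, β j g * β k g ∂μ) = ∫ g, β k g * β j g ∂μ by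
      congr 1; funext g; ring]
    exact hq k j
  calc ∑ j, ∑ k, (∫ g, β j g * β k g ∂μ) • (F j ⊗ₖ F k)
      = ∑ j, ∑ k, (if j = k then lam else 0) • (F j ⊗ₖ F k) :=
        Finset.sum_congr rfl fun j _ => Finset.sum_congr rfl fun k _ => by rw [hswap j k]
    _ = ∑ j, lam • (F j ⊗ₖ F j) := by
        refine Finset.sum_congr rfl fun j _ => ?_
        simp [ite_smul, Finset.sum_ite_eq, Finset.mem_univ]
    _ = lam • ∑ j, (F j ⊗ₖ F j) := (Finset.smul_sum).symm
    _ = ((-(Matrix.trace (A * A))) / (d : ℂ)) • ∑ j, F j ⊗ₖ F j := by rw [hlamval]
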